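/- With notation as above (functions h : ℤ* → ℤ/2ℤ, cylinder sets C_k, and the maps τ¹_*, τ^{-1}_* given by τ^{-1}_*(h)(i) = h(−i) if i < 0; h(−i)+h(2) if i = 1; h(−i)+h(2)+h(3) if i = 2; h(−i)+h(i−1)+h(i)+h(i+1) if i > 2): for every integer k ≥ 2, τ^{-1}_*(C_{k+1}) ⊆ C_k. -/
import Mathlib


/-- The map `τ¹_*` on functions `ℤ* → ℤ/2ℤ` (encoded as functions on `ℤ` whose value at
`0` is irrelevant and set to `0`). -/
def tau1 (h : ℤ → ZMod 2) : ℤ → ZMod 2 := fun i =>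
  if i < -2 then h (-i) + h (i - 1) + h i + h (i + 1)
  else if i = -2 then h (-i) + h (-2) + h (-3)
  else if i = -1 then h (-i) + h (-2)
  else if i = 0 then 0
  else h (-i)

/-- The map `τ⁻¹_*` on functions `ℤ* → ℤ/2ℤ`. -/
def tauNeg1 (h : ℤ → ZMod 2) : ℤ → ZMod 2 := fun i =>
  if i < 0 then h (-i)
  else if i = 0 then 0
  else if i = 1 then h (-i) + h 2
  else if i = 2 then h (-i) + h 2 + h 3
  else h (-i) + h (i - 1) + h i + h (i + 1)

/-- The cylinder set `C_k = {h : h(k) = h(-k-1) = 1, h(i) = 0 for -k-1 < i < k, i ≠ 0}`. -/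
def Cyl (k : ℤ) : Set (ℤ → ZMod 2) :=
  {h | h k = 1 ∧ h (-k - 1) = 1 ∧ ∀ i : ℤ, -k - 1 < i → i < k → i ≠ 0 → h i = 0}

/-- `HasProx h k` says the proximity `P(h) = min {|i| : h(i) ≠ 0}` equals `k`. -/
def HasProx (h : ℤ → ZMod 2) (k : ℤ) : Prop :=
  (h k ≠ 0 ∨ h (-k) ≠ 0) ∧ ∀ i : ℤ, i ≠ 0 → |i| < k → h i = 0

/-- For every integer `k ≥ 2`, `τ⁻¹_*(C_{k+1}) ⊆ C_k`. -/
theorem stmt12 (k : ℤ) (hk : 2 ≤ k) : tauNeg1 '' Cyl (k + 1) ⊆ Cyl k := by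
  rintro g ⟨h, ⟨h1, h2, h3⟩, rfl⟩
  have hz : ∀ i : ℤ, i ≠ 0 → -k - 2 < i → i < k + 1 → h i = 0 := by
    intro i hi hl hr
    exact h3 i (by omega) (by omega) hi
  refine ⟨?_, ?_, ?_⟩
  · -- tauNeg1 h k = 1
    show tauNeg1 h k = 1
    unfold tauNeg1
    rcases eq_or_lt_of_le hk with hk2 | hk3
    · simp only [show ¬ k < 0 by omega, show k ≠ 0 by omega, show k ≠ 1 by omega,
        if_neg, if_false]
      rw [if_pos hk2.symm]
      rw [hz (-k) (by omega) (by omega) (by omega), hz 2 (by omega) (by omega) (by omega)]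
      rw [show (3:ℤ) = k + 1 by omega, h1]
      ring
    · simp only [show ¬ k < 0 by omega, show k ≠ 0 by omega, show k ≠ 1 by omega,
        show k ≠ 2 by omega, if_neg, if_false]
      rw [hz (-k) (by omega) (by omega) (by omega),
        hz (k-1) (by omega) (by omega) (by omega),
        hz k (by omega) (by omega) (by omega), h1]
      ring
  · show tauNeg1 h (-k - 1) = 1
    unfold tauNeg1
    rw [if_pos (by omega : -k - 1 < 0)]
    rw [show -(-k-1) = k + 1 by ring, h1]
  · intro i hl hr hi
    show tauNeg1 h i = 0
    unfold tauNeg1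
    rcases lt_trichotomy i 0 with hneg | h0 | hpos
    · rw [if_pos hneg, hz (-i) (by omega) (by omega) (by omega)]
    · omega
    · rcases lt_trichotomy i 1 with _ | hi1 | hi2
      · omega
      · simp only [show ¬ i < 0 by omega, hi, if_neg, if_false, if_pos hi1]
        rw [hi1, hz (-1) (by omega) (by omega) (by omega),
          hz 2 (by omega) (by omega) (by omega)]
        ring
      · rcases lt_trichotomy i 2 with _ | hi22 | hi3
        · omega
        · simp only [show ¬ i < 0 by omega, hi, show i ≠ 1 by omega, if_neg, if_false,
            if_pos hi22]
          rw [hi22, hz (-2) (by omega) (by omega) (by omega),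
            hz 2 (by omega) (by omega) (by omega),
            hz 3 (by omega) (by omega) (by omega)]
          ring
        · simp only [show ¬ i < 0 by omega, hi, show i ≠ 1 by omega,
            show i ≠ 2 by omega, if_neg, if_false]
          rw [hz (-i) (by omega) (by omega) (by omega),
            hz (i-1) (by omega) (by omega) (by omega),
            hz i (by omega) (by omega) (by omega),
            hz (i+1) (by omega) (by omega) (by omega)]
          ring
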